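/- In a rooted tree on n nodes, one can choose a set M of at most n/⌈log₂ n⌉ 'macro' nodes such that every connected component of the forest obtained by deleting M has at most ⌈log₂ n⌉ nodes. (Existence of a micro-macro decomposition.) -/

import Mathlib

open SimpleGraph

/-- Ancestor relation generated by a parent function. -/
def TreeAnc {V : Type*} (f : V → V) (u v : V) : Prop := ∃ m, f^[m] u = v

lemma treeAnc_refl {V : Type*} (f : V → V) (u : V) : TreeAnc f u u := ⟨0, rfl⟩

lemma treeAnc_of_f {V : Type*} {f : V → V} {u v : V} (h : TreeAnc f (f u) v) :
    TreeAnc f u v := by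
  obtain ⟨m, hm⟩ := h
  exact ⟨m + 1, by rw [Function.iterate_succ_apply]; exact hm⟩

lemma treeAnc_step {V : Type*} {f : V → V} {u v : V} (h : TreeAnc f u v) (hne : u ≠ v) :
    TreeAnc f (f u) v := by
  obtain ⟨m, hm⟩ := h
  cases m with
  | zero => exact absurd hm hne
  | succ m => exact ⟨m, by rw [← Function.iterate_succ_apply]; exact hm⟩

/-- Any vertex reaches the root by iterating the parent function. -/
lemma treeAnc_root {V : Type*} {f : V → V} {depth : V → ℕ} {root : V}
    (hf0 : f root = root) (hfd : ∀ v, v ≠ root → depth (f v) < depth v) (u : V) :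
    TreeAnc f u root := by
  by_cases h : u = root
  · exact h ▸ treeAnc_refl f root
  · have hd : depth (f u) < depth u := hfd u h
    have := treeAnc_root hf0 hfd (f u)
    exact treeAnc_of_f this
termination_by depth u
decreasing_by exact hd

lemma depth_lt_of_treeAnc {V : Type*} {f : V → V} {depth : V → ℕ} {root : V}
    (hf0 : f root = root) (hfd : ∀ v, v ≠ root → depth (f v) < depth v)
    {u v : V} (h : TreeAnc f u v) (hne : u ≠ v) : depth v < depth u := by
  have hfix : ∀ j, f^[j] root = root := by
    intro j; induction j with
    | zero => rfl
    | succ j hj => rw [Function.iterate_succ_apply, hf0, hj]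
  obtain ⟨m, hm⟩ := h
  induction m generalizing u with
  | zero => exact absurd hm hne
  | succ m ih =>
    have hur : u ≠ root := by
      intro hu
      subst hu
      exact hne (by rw [hfix] at hm; exact hm)
    have hlt := hfd u hur
    rw [Function.iterate_succ_apply] at hm
    by_cases hfu : f u = v
    · exact hfu ▸ hlt
    · exact lt_trans (ih hfu hm) hlt

/-- From a tree we can extract a parent function and a depth function. -/
lemma SimpleGraph.IsTree.exists_parent {V : Type*} {G : SimpleGraph V} (hG : G.IsTree) (root : V) :
    ∃ (f : V → V) (depth : V → ℕ), f root = root ∧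
      (∀ v, v ≠ root → depth (f v) < depth v) ∧
      (∀ u w, G.Adj u w → f u = w ∨ f w = u) := by
  classical
  choose p hp hp' using (hG.existsUnique_path · root)
  refine ⟨fun v => (p v).getVert 1, fun v => (p v).length, ?_, ?_, ?_⟩
  · have hnil : (Walk.nil : G.Walk root root) = p root := hp' root Walk.nil Walk.IsPath.nil
    show (p root).getVert 1 = root
    rw [← hnil]
    rfl
  · intro v hv
    have hnil : ¬ (p v).Nil := Walk.not_nil_of_ne hv
    have ht : (p v).tail.IsPath := (hp v).tail
    have heq : (p v).tail = p ((p v).getVert 1) := hp' _ _ ht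
    have hlen := Walk.length_tail_add_one hnil
    show (p ((p v).getVert 1)).length < (p v).length
    rw [← heq]
    omega
  · intro u w h
    by_cases hu : u ∈ (p w).support
    · right
      have hq : ((p w).takeUntil u hu).IsPath := (hp w).takeUntil hu
      have hlq : ((p w).takeUntil u hu).length = 1 := by
        have hne0 : ((p w).takeUntil u hu).length ≠ 0 := fun h0 =>
          h.ne' (Walk.eq_of_length_eq_zero h0)
        by_contra hne1
        have hsingle : (Walk.cons h Walk.nil : G.Walk u w).IsPath := by
          simp [h.ne]
        have hrev : ((p w).takeUntil u hu).reverse.IsPath := hq.reverse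
        have := (hG.existsUnique_path u w).unique hrev hsingle
        have hlen := congrArg Walk.length this
        simp at hlen
        omega
      show (p w).getVert 1 = u
      have hspec := (p w).take_spec hu
      have hgv := Walk.getVert_append ((p w).takeUntil u hu) ((p w).dropUntil u hu) 1
      rw [hspec] at hgv
      rw [hgv, hlq]
      simp
    · left
      have h1 : (Walk.cons h (p w)).IsPath := by
        rw [Walk.cons_isPath_iff]
        exact ⟨hp w, hu⟩
      have heq := hp' u _ h1
      show (p u).getVert 1 = w
      rw [← heq, Walk.getVert_cons_succ, Walk.getVert_zero]

/-- Core combinatorial lemma: iteratively removing deepest heavy subtrees. -/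
lemma core_lemma {V : Type*} [Fintype V] [DecidableEq V] (G : SimpleGraph V) (root : V)
    (f : V → V) (depth : V → ℕ) (hf0 : f root = root)
    (hfd : ∀ v, v ≠ root → depth (f v) < depth v)
    (hadj : ∀ u w, G.Adj u w → f u = w ∨ f w = u) (k : ℕ) (hk : 1 ≤ k) :
    ∀ N (A : Finset V), A.card ≤ N → ∀ M0 : Finset V,
      (∀ u ∈ A, f u ∈ A ∨ f u ∈ M0) → (∀ w, w ∉ A → w ∉ M0 → f w ∉ A) →
      ∃ M : Finset V, k * M.card ≤ A.card ∧ ∀ u ∈ A, u ∉ M →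
        ∃ Q : Finset V, u ∈ Q ∧ Q.card ≤ k ∧
          ∀ x ∈ Q, ∀ w, G.Adj x w → w ∈ Q ∨ w ∈ M0 ∨ w ∈ M := by
  intro N
  induction N using Nat.strong_induction_on with
  | _ N IH =>
  intro A hAN M0 h1 h2
  classical
  by_cases hex : ∃ v, k ≤ (A.filter (fun u => TreeAnc f u v)).card
  · -- pick a deepest heavy vertex
    set T : Finset V := Finset.univ.filter
      (fun v => k ≤ (A.filter (fun u => TreeAnc f u v)).card) with hT
    have hTne : T.Nonempty := by
      obtain ⟨v, hv⟩ := hex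
      exact ⟨v, by simp [hT, hv]⟩
    obtain ⟨v, hvT, hvmax⟩ := T.exists_max_image depth hTne
    have hvk : k ≤ (A.filter (fun u => TreeAnc f u v)).card := by
      simpa [hT] using hvT
    set B : Finset V := A.filter (fun u => TreeAnc f u v) with hB
    have hBA : B ⊆ A := Finset.filter_subset _ _
    have hBne : B.Nonempty := Finset.card_pos.mp (lt_of_lt_of_le hk hvk)
    set A' : Finset V := A \ B with hA'
    have hA'card : A'.card = A.card - B.card := Finset.card_sdiff_of_subset hBA
    have hBcard : B.card ≤ A.card := Finset.card_le_card hBA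
    have hlt : A'.card < A.card := by
      have := Finset.card_pos.mpr hBne
      omega
    have h1' : ∀ u ∈ A', f u ∈ A' ∨ f u ∈ M0 ∪ {v} := by
      intro u hu
      have huA : u ∈ A := (Finset.mem_sdiff.mp hu).1
      have huB : u ∉ B := (Finset.mem_sdiff.mp hu).2
      have hanc : ¬ TreeAnc f u v := fun hc => huB (by simp [hB, huA, hc])
      rcases h1 u huA with hfA | hfM
      · left
        rw [Finset.mem_sdiff]
        refine ⟨hfA, fun hfB => ?_⟩
        have : TreeAnc f (f u) v := by simpa [hB] using (Finset.mem_filter.mp hfB).2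
        exact hanc (treeAnc_of_f this)
      · right; exact Finset.mem_union_left _ hfM
    have h2' : ∀ w, w ∉ A' → w ∉ M0 ∪ {v} → f w ∉ A' := by
      intro w hw hwM
      have hwM0 : w ∉ M0 := fun hc => hwM (Finset.mem_union_left _ hc)
      have hwv : w ≠ v := fun hc => hwM (Finset.mem_union_right _ (by simp [hc]))
      by_cases hwA : w ∈ A
      · have hwB : w ∈ B := by
          by_contra hwB
          exact hw (Finset.mem_sdiff.mpr ⟨hwA, hwB⟩)
        have hanc : TreeAnc f w v := by simpa [hB] using (Finset.mem_filter.mp hwB).2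
        have hfanc : TreeAnc f (f w) v := treeAnc_step hanc hwv
        intro hfA'
        have hfA : f w ∈ A := (Finset.mem_sdiff.mp hfA').1
        exact (Finset.mem_sdiff.mp hfA').2 (by simp [hB, hfA, hfanc])
      · intro hfA'
        exact h2 w hwA hwM0 ((Finset.mem_sdiff.mp hfA').1)
    obtain ⟨M', hM'card, hM'Q⟩ := IH A'.card (lt_of_lt_of_le hlt hAN) A' le_rfl
      (M0 ∪ {v}) h1' h2'
    refine ⟨insert v M', ?_, ?_⟩
    · have hins : (insert v M').card ≤ M'.card + 1 := Finset.card_insert_le _ _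
      have : k * (insert v M').card ≤ k * M'.card + k := by
        calc k * (insert v M').card ≤ k * (M'.card + 1) := Nat.mul_le_mul_left _ hins
          _ = k * M'.card + k := by ring
      omega
    · intro u huA huM
      have huv : u ≠ v := fun hc => huM (hc ▸ Finset.mem_insert_self _ _)
      have huM' : u ∉ M' := fun hc => huM (Finset.mem_insert_of_mem hc)
      by_cases huA' : u ∈ A'
      · obtain ⟨Q, hQ1, hQ2, hQ3⟩ := hM'Q u huA' huM'
        refine ⟨Q, hQ1, hQ2, fun x hx w hxw => ?_⟩
        rcases hQ3 x hx w hxw with hQ | hM0v | hM'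
        · exact Or.inl hQ
        · rcases Finset.mem_union.mp hM0v with hM0 | hv
          · exact Or.inr (Or.inl hM0)
          · exact Or.inr (Or.inr (Finset.mem_insert.mpr (Or.inl (Finset.mem_singleton.mp hv))))
        · exact Or.inr (Or.inr (Finset.mem_insert_of_mem hM'))
      · -- u is in the removed heavy subtree B
        have huB : u ∈ B := by
          by_contra hc
          exact huA' (Finset.mem_sdiff.mpr ⟨huA, hc⟩)
        have hanc : TreeAnc f u v := by simpa [hB] using (Finset.mem_filter.mp huB).2
        -- find the child of v above u
        have hP : ∃ m, 0 < m ∧ f^[m] u = v := by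
          obtain ⟨m, hm⟩ := hanc
          refine ⟨m, ?_, hm⟩
          rcases Nat.eq_zero_or_pos m with rfl | hm0
          · exact absurd hm huv
          · exact hm0
        set m0 := Nat.find hP with hm0def
        obtain ⟨hm0pos, hm0⟩ := Nat.find_spec hP
        set c := f^[m0 - 1] u with hc
        have hfc : f c = v := by
          have h' : f^[(m0 - 1) + 1] u = f (f^[m0 - 1] u) := Function.iterate_succ_apply' f _ u
          have h'' : m0 - 1 + 1 = m0 := by omega
          rw [h''] at h'
          rw [hc, ← h']
          exact hm0
        have hcv : c ≠ v := by
          intro hcveq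
          rcases Nat.eq_zero_or_pos (m0 - 1) with h0 | hpos
          · have hcu : c = u := by rw [hc, h0]; simp
            exact huv (by rw [← hcu]; exact hcveq)
          · exact Nat.find_min hP (show m0 - 1 < m0 by omega) ⟨hpos, hcveq⟩
        have hcroot : c ≠ root := by
          intro hcr
          have hvr : v = root := by rw [← hfc, hcr, hf0]
          exact hcv (by rw [hcr, hvr])
        have hdc : depth v < depth c := by
          have := hfd c hcroot
          rwa [hfc] at this
        set Q : Finset V := A.filter (fun x => TreeAnc f x c) with hQ
        have hQk : Q.card ≤ k := by
          by_contra hcon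
          push_neg at hcon
          have hcT : c ∈ T := by
            rw [hT, Finset.mem_filter]
            exact ⟨Finset.mem_univ _, le_of_lt hcon⟩
          exact absurd (hvmax c hcT) (not_le.mpr hdc)
        refine ⟨Q, ?_, hQk, ?_⟩
        · simp only [hQ, Finset.mem_filter]
          exact ⟨huA, ⟨m0 - 1, rfl⟩⟩
        · intro x hx w hxw
          have hxA : x ∈ A := (Finset.mem_filter.mp hx).1
          have hxanc : TreeAnc f x c := (Finset.mem_filter.mp hx).2
          rcases hadj x w hxw with hfx | hfw
          · by_cases hxc : x = c
            · right; right
              rw [← hfx, hxc, hfc]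
              exact Finset.mem_insert_self _ _
            · have hwanc : TreeAnc f w c := hfx ▸ treeAnc_step hxanc hxc
              rcases h1 x hxA with hfA | hfM0
              · exact Or.inl (by simp [hQ, hfx ▸ hfA, hwanc])
              · exact Or.inr (Or.inl (hfx ▸ hfM0))
          · have hwanc : TreeAnc f w c := treeAnc_of_f (hfw ▸ hxanc)
            by_cases hwM0 : w ∈ M0
            · exact Or.inr (Or.inl hwM0)
            · by_cases hwA : w ∈ A
              · exact Or.inl (by simp [hQ, hwA, hwanc])
              · exact absurd (hfw ▸ hxA) (h2 w hwA hwM0)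
  · -- no heavy vertex: the whole of A is small
    push_neg at hex
    have hAk : A.card ≤ k := by
      have hroot := hex root
      have : A.filter (fun u => TreeAnc f u root) = A := by
        apply Finset.filter_true_of_mem
        intro x _
        exact treeAnc_root hf0 hfd x
      rw [this] at hroot
      omega
    refine ⟨∅, by simp, fun u hu _ => ⟨A, hu, hAk, ?_⟩⟩
    intro x hx w hxw
    rcases hadj x w hxw with hfx | hfw
    · rcases h1 x hx with hfA | hfM0
      · exact Or.inl (hfx ▸ hfA)
      · exact Or.inr (Or.inl (hfx ▸ hfM0))
    · by_cases hwM0 : w ∈ M0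
      · exact Or.inr (Or.inl hwM0)
      · by_cases hwA : w ∈ A
        · exact Or.inl hwA
        · exact absurd (hfw ▸ hx) (h2 w hwA hwM0)

/-- Micro-macro decomposition: in a tree on `n ≥ 2` nodes one can choose a set `M` of at
most `n / ⌈log₂ n⌉` macro nodes so that every connected component left after deleting `M`
has at most `⌈log₂ n⌉` nodes. -/
theorem micro_macro_decomposition {n : ℕ} (hn : 2 ≤ n)
    (G : SimpleGraph (Fin n)) (hG : G.IsTree) :
    ∃ M : Finset (Fin n), M.card ≤ n / Nat.clog 2 n ∧
      ∀ C : (G.induce ((↑M : Set (Fin n))ᶜ)).ConnectedComponent,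
        Nat.card {v // (G.induce ((↑M : Set (Fin n))ᶜ)).connectedComponentMk v = C}
          ≤ Nat.clog 2 n := by
  classical
  set k := Nat.clog 2 n with hkdef
  have hk : 1 ≤ k := Nat.clog_pos one_lt_two hn
  have hroot : (0 : ℕ) < n := by omega
  set root : Fin n := ⟨0, hroot⟩ with hrootdef
  obtain ⟨f, depth, hf0, hfd, hadj⟩ := hG.exists_parent root
  obtain ⟨M, hMcard, hQ⟩ := core_lemma G root f depth hf0 hfd hadj k hk
    Finset.univ.card Finset.univ le_rfl ∅
    (fun u _ => Or.inl (Finset.mem_univ _))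
    (fun w hw _ => absurd (Finset.mem_univ w) hw)
  have hcardn : (Finset.univ : Finset (Fin n)).card = n := by simp
  refine ⟨M, ?_, ?_⟩
  · rw [Nat.le_div_iff_mul_le (by omega : 0 < k), mul_comm]
    rw [hcardn] at hMcard
    exact hMcard
  · intro C
    obtain ⟨v, hv⟩ := C.exists_rep
    have hvM : (v : Fin n) ∉ M := fun h => v.2 (Finset.mem_coe.mpr h)
    obtain ⟨Q, hvQ, hQk, hQclosed⟩ := hQ v.1 (Finset.mem_univ _) hvM
    -- walking inside the complement stays inside Q
    have key : ∀ (a b : ↥((↑M : Set (Fin n))ᶜ))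
        (p : (G.induce ((↑M : Set (Fin n))ᶜ)).Walk a b), (a : Fin n) ∈ Q → (b : Fin n) ∈ Q := by
      intro a b p
      induction p with
      | nil => exact id
      | @cons x y z h p ih =>
        intro hx
        apply ih
        have hadjG : G.Adj (x : Fin n) (y : Fin n) := h
        rcases hQclosed (x : Fin n) hx (y : Fin n) hadjG with hy | hy | hy
        · exact hy
        · simp at hy
        · exact absurd hy (fun h => y.2 (Finset.mem_coe.mpr h))
    have hmem : ∀ u : {v // (G.induce ((↑M : Set (Fin n))ᶜ)).connectedComponentMk v = C},
        ((u : ↥((↑M : Set (Fin n))ᶜ)) : Fin n) ∈ Q := by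
      rintro ⟨u, hu⟩
      have hreach : (G.induce ((↑M : Set (Fin n))ᶜ)).Reachable v u := by
        have heq : (G.induce ((↑M : Set (Fin n))ᶜ)).connectedComponentMk u
            = (G.induce ((↑M : Set (Fin n))ᶜ)).connectedComponentMk v := hu.trans hv.symm
        exact (SimpleGraph.ConnectedComponent.eq.mp heq).symm
      obtain ⟨p⟩ := hreach
      exact key v u p hvQ
    have hinj : Function.Injective
        (fun u : {v // (G.induce ((↑M : Set (Fin n))ᶜ)).connectedComponentMk v = C} =>
          (⟨((u : ↥((↑M : Set (Fin n))ᶜ)) : Fin n), hmem u⟩ : {x // x ∈ Q})) := by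
      intro a b hab
      apply Subtype.ext
      apply Subtype.ext
      simpa using congrArg Subtype.val hab
    calc Nat.card {v // (G.induce ((↑M : Set (Fin n))ᶜ)).connectedComponentMk v = C}
        ≤ Nat.card {x // x ∈ Q} := Nat.card_le_card_of_injective _ hinj
      _ = Q.card := Nat.card_eq_finsetCard Q
      _ ≤ k := hQk
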